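/- Contraction C1 preserves the intersection data: let A be an m×m symmetric matrix over ZMod 2 (with m ≥ 2) and let v, p be two distinct indices such that A v v = 1, A v p = 1, and A v k = 0 for every index k different from v and p (i.e., v is an odd vertex of valency 1, attached only to p). Let B be the (m−1)×(m−1) matrix obtained from A by deleting the row and column indexed by v and adding 1 to the diagonal entry at p (flipping the parity of p). Then det B = det A and rank A = rank B + 1 (so the corank is preserved). -/

import Mathlib

open Matrix Module

variable {K : Type*} [Field K]

noncomputable def Submodule.prodLequiv {M N : Type*} [AddCommGroup M] [AddCommGroup N]
    [Module K M] [Module K N] (p : Submodule K M) (q : Submodule K N) :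
    (p.prod q) ≃ₗ[K] p × q where
  toFun x := (⟨x.1.1, x.2.1⟩, ⟨x.1.2, x.2.2⟩)
  invFun y := ⟨(y.1.1, y.2.1), y.1.2, y.2.2⟩
  left_inv _ := rfl
  right_inv _ := rfl
  map_add' _ _ := rfl
  map_smul' _ _ := rfl

theorem LinearMap.range_prodMap' {M N M' N' : Type*} [AddCommGroup M] [AddCommGroup N]
    [AddCommGroup M'] [AddCommGroup N'] [Module K M] [Module K N] [Module K M'] [Module K N']
    (f : M →ₗ[K] M') (g : N →ₗ[K] N') :
    LinearMap.range (f.prodMap g) = (LinearMap.range f).prod (LinearMap.range g) := by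
  ext ⟨x, y⟩
  simp only [LinearMap.mem_range, Submodule.mem_prod, LinearMap.prodMap_apply, Prod.mk.injEq,
    Prod.exists]
  constructor
  · rintro ⟨a, b, h1, h2⟩
    exact ⟨⟨a, h1⟩, ⟨b, h2⟩⟩
  · rintro ⟨⟨a, h1⟩, ⟨b, h2⟩⟩
    exact ⟨a, b, h1, h2⟩

theorem rank_fromBlocks_diag {l n : Type*} [Fintype l] [Fintype n] [DecidableEq l] [DecidableEq n]
    (A : Matrix l l K) (B : Matrix n n K) :
    (Matrix.fromBlocks A 0 0 B).rank = A.rank + B.rank := by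
  classical
  let e : (l ⊕ n → K) ≃ₗ[K] (l → K) × (n → K) := LinearEquiv.sumArrowLequivProdArrow l n K K
  have hM : (Matrix.fromBlocks A 0 0 B).mulVecLin
      = e.symm.toLinearMap ∘ₗ (A.mulVecLin.prodMap B.mulVecLin) ∘ₗ e.toLinearMap := by
    apply LinearMap.ext
    intro x
    simp only [mulVecLin_apply, LinearMap.comp_apply, LinearEquiv.coe_coe,
      LinearMap.prodMap_apply, mulVecLin_apply]
    rw [fromBlocks_mulVec]
    have h1 : ((LinearEquiv.sumArrowLequivProdArrow l n K K) x).1 = x ∘ Sum.inl := rfl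
    have h2 : ((LinearEquiv.sumArrowLequivProdArrow l n K K) x).2 = x ∘ Sum.inr := rfl
    ext k
    cases k <;> simp [e, h1, h2, Equiv.sumArrowEquivProdArrow]
  rw [Matrix.rank, hM, LinearMap.range_comp, LinearMap.range_comp, LinearEquiv.range,
    Submodule.map_top, LinearEquiv.finrank_map_eq, LinearMap.range_prodMap']
  rw [(Submodule.prodLequiv _ _).finrank_eq, Module.finrank_prod, Matrix.rank, Matrix.rank]

/-- Contraction C1: blowing down an odd curve `v` of valency 1 attached only to `p`
(delete the row and column of `v`, flip the parity of `p`) preserves the determinant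
and drops the rank of the mod-2 intersection matrix by exactly one (so the corank is
preserved). -/
theorem contraction_C1 {m : ℕ} (hm : 2 ≤ m) (A : Matrix (Fin m) (Fin m) (ZMod 2))
    (hA : A.IsSymm) (v p : Fin m) (hvp : v ≠ p)
    (hvv : A v v = 1) (hAvp : A v p = 1)
    (hval : ∀ k, k ≠ v → k ≠ p → A v k = 0) :
    (A.submatrix (Subtype.val : {k : Fin m // k ≠ v} → Fin m) Subtype.val
        + Matrix.single (⟨p, hvp.symm⟩ : {k : Fin m // k ≠ v})
            (⟨p, hvp.symm⟩ : {k : Fin m // k ≠ v}) 1).det = A.det ∧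
      A.rank = (A.submatrix (Subtype.val : {k : Fin m // k ≠ v} → Fin m) Subtype.val
        + Matrix.single (⟨p, hvp.symm⟩ : {k : Fin m // k ≠ v})
            (⟨p, hvp.symm⟩ : {k : Fin m // k ≠ v}) 1).rank + 1 := by
  classical
  set p' : {k : Fin m // k ≠ v} := ⟨p, hvp.symm⟩ with hp'
  set D : Matrix {k : Fin m // k ≠ v} {k : Fin m // k ≠ v} (ZMod 2) :=
    A.submatrix Subtype.val Subtype.val with hDdef
  set Bt := D + Matrix.single p' p' (1 : ZMod 2) with hBt
  let e : Unit ⊕ {k : Fin m // k ≠ v} ≃ Fin m :=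
  { toFun := Sum.elim (fun _ => v) Subtype.val
    invFun := fun k => if h : k = v then Sum.inl () else Sum.inr ⟨k, h⟩
    left_inv := by
      rintro (⟨⟩ | ⟨k, hk⟩)
      · simp
      · simp [hk]
    right_inv := by intro k; by_cases h : k = v <;> simp [h] }
  let r : Matrix Unit {k : Fin m // k ≠ v} (ZMod 2) := Matrix.of fun _ j => A v j.val
  let c : Matrix {k : Fin m // k ≠ v} Unit (ZMod 2) := Matrix.of fun i _ => A i.val v
  have hsub : A.submatrix e e = Matrix.fromBlocks 1 r c D := by
    ext i j
    cases i <;> cases j <;>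
      simp [e, r, c, D, Matrix.fromBlocks, Matrix.one_apply, hvv]
  have hsymm : ∀ i j, A i j = A j i := fun i j => (congrFun (congrFun hA i) j).symm
  have hrow : ∀ j : {k : Fin m // k ≠ v}, A v j.val = if j = p' then 1 else 0 := by
    intro j
    by_cases h : j = p'
    · simp [h, hp', hAvp]
    · rw [if_neg h]
      exact hval j.val j.2 (fun hj => h (Subtype.ext hj))
  have hcr : c * r = Matrix.single p' p' (1 : ZMod 2) := by
    ext i j
    simp only [Matrix.mul_apply, Finset.univ_unique, Finset.sum_singleton]
    rw [show c i default = A v i.val from (hsymm i.val v ▸ rfl)]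
    rw [show r default j = A v j.val from rfl]
    rw [hrow i, hrow j]
    by_cases hi : i = p' <;> by_cases hj : j = p' <;>
      simp [hi, hj, Matrix.single, eq_comm]
  have hDsub : D - c * r = Bt := by
    rw [hcr, hBt, sub_eq_add_neg]
    congr 1
    ext i j
    exact (CharTwo.neg_eq _)
  constructor
  · rw [← Matrix.det_submatrix_equiv_self e A, hsub, Matrix.det_fromBlocks_one₁₁, hDsub]
  · haveI : Invertible (1 : Matrix Unit Unit (ZMod 2)) := invertibleOne
    rw [← Matrix.rank_submatrix A e e, hsub,
      Matrix.fromBlocks_eq_of_invertible₁₁ (1 : Matrix Unit Unit (ZMod 2)) r c D]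
    rw [invOf_one, Matrix.mul_one, Matrix.one_mul, hDsub]
    rw [Matrix.rank_mul_eq_left_of_isUnit_det _ _ (by
      rw [Matrix.det_fromBlocks_zero₂₁]; simp)]
    rw [Matrix.rank_mul_eq_right_of_isUnit_det _ _ (by
      rw [Matrix.det_fromBlocks_zero₁₂]; simp)]
    rw [rank_fromBlocks_diag, Matrix.rank_one]
    simp [add_comm]
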